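/- Let V be an irreducible weight module for the toroidal Lie algebra with finite-dimensional weight spaces. If z₁ and z₂ are nonzero central operators on V of the same degree m, then z₁ = λ z₂ for some nonzero scalar λ ∈ ℂ. -/

import Mathlib

/- STATEMENT 10: Let V be an irreducible weight module for the toroidal Lie
algebra with finite-dimensional weight spaces. If z₁ and z₂ are nonzero central
operators on V of the same degree m, then z₁ = λ z₂ for a nonzero scalar λ ∈ ℂ. -/

abbrev OmegaA (n : ℕ) : Type := ((Fin n → ℤ) × Fin n) →₀ ℂ

noncomputable def dAelt (n : ℕ) (r : Fin n → ℤ) : OmegaA n :=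
  ∑ i, Finsupp.single (r, i) (r i : ℂ)

noncomputable def dA (n : ℕ) : Submodule ℂ (OmegaA n) :=
  Submodule.span ℂ (Set.range (dAelt n))

abbrev OmegaQuot (n : ℕ) := OmegaA n ⧸ dA n

noncomputable def Kc (n : ℕ) (u : Fin n → ℂ) (r : Fin n → ℤ) : OmegaQuot n :=
  Submodule.Quotient.mk (∑ i, Finsupp.single (r, i) (u i))

def zc {n : ℕ} (r : Fin n → ℤ) : Fin n → ℂ := fun i => (r i : ℂ)

/-- τ̃ = 𝒢⊗A ⊕ Ω_A/d_A ⊕ D as a vector space. -/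
abbrev TorTilde (n : ℕ) (G : Type*) [LieRing G] [LieAlgebra ℂ G] :=
  ((Fin n → ℤ) →₀ G) × OmegaQuot n × (Fin n → ℂ)

section
variable (n : ℕ) (G : Type*) [LieRing G] [LieAlgebra ℂ G]

noncomputable def gX (r : Fin n → ℤ) (X : G) : TorTilde n G := (Finsupp.single r X, 0, 0)

noncomputable def gK (u : Fin n → ℂ) (r : Fin n → ℤ) : TorTilde n G := (0, Kc n u r, 0)

noncomputable def gd (i : Fin n) : TorTilde n G := (0, 0, Pi.single i 1)

/-- The Cartan subalgebra h̃ = h ⊕ Σ ℂKᵢ ⊕ D of τ̃, as a set of elements. -/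
noncomputable def cartSet (H : LieSubalgebra ℂ G) : Set (TorTilde n G) :=
  ((fun X : G => gX n G 0 X) '' (H : Set G)) ∪
    (Set.range fun u : Fin n → ℂ => gK n G u 0) ∪ (Set.range (gd n G))

/-- The weight space of a weight module attached to a weight χ (a simultaneous
eigenvalue function on the Cartan h̃). -/
noncomputable def wtSp (H : LieSubalgebra ℂ G) {V : Type*} [AddCommGroup V] [Module ℂ V]
    (ρ : TorTilde n G →ₗ[ℂ] Module.End ℂ V) (χ : TorTilde n G → ℂ) : Submodule ℂ V :=
  ⨅ x ∈ cartSet n G H, Module.End.eigenspace (ρ x) (χ x)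
end

noncomputable def genSet (n : ℕ) (G : Type*) [LieRing G] [LieAlgebra ℂ G] :
    Set (TorTilde n G) :=
  (Set.range fun p : (Fin n → ℤ) × G => gX n G p.1 p.2) ∪
  (Set.range fun p : (Fin n → ℂ) × (Fin n → ℤ) => gK n G p.1 p.2) ∪
  Set.range (gd n G)

lemma torSpan (n : ℕ) (G : Type*) [LieRing G] [LieAlgebra ℂ G] :
    Submodule.span ℂ (genSet n G) = ⊤ := by
  rw [eq_top_iff]
  rintro ⟨f, ω, d⟩ -
  have hf : ((f, 0, 0) : TorTilde n G) ∈ Submodule.span ℂ (genSet n G) := by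
    induction f using Finsupp.induction_linear with
    | zero => exact Submodule.zero_mem _
    | add f g hf hg =>
        have h : ((f + g, 0, 0) : TorTilde n G) = (f, 0, 0) + (g, 0, 0) := by
          simp [Prod.ext_iff]
        rw [h]; exact Submodule.add_mem _ hf hg
    | single r X =>
        exact Submodule.subset_span (Or.inl (Or.inl ⟨(r, X), rfl⟩))
  have hω : ((0, ω, 0) : TorTilde n G) ∈ Submodule.span ℂ (genSet n G) := by
    obtain ⟨a, rfl⟩ := Submodule.Quotient.mk_surjective (dA n) ω
    induction a using Finsupp.induction_linear with
    | zero => simp only [Submodule.Quotient.mk_zero]; exact Submodule.zero_mem (Submodule.span ℂ (genSet n G))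
    | add f g hf hg =>
        have h : ((0, Submodule.Quotient.mk (f + g), 0) : TorTilde n G) =
            (0, Submodule.Quotient.mk f, 0) + (0, Submodule.Quotient.mk g, 0) := by
          simp [Prod.ext_iff, Submodule.Quotient.mk_add]
        rw [h]; exact Submodule.add_mem _ hf hg
    | single p c =>
        obtain ⟨r, i⟩ := p
        have h : ((0, Submodule.Quotient.mk (Finsupp.single (r, i) c), 0) : TorTilde n G) =
            gK n G (Pi.single i c) r := by
          have hs : (∑ j, Finsupp.single ((r, j) : (Fin n → ℤ) × Fin n) (Pi.single i c j))
              = Finsupp.single (r, i) c := by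
            rw [Finset.sum_eq_single i]
            · simp
            · intro j _ hj; simp [Pi.single_eq_of_ne hj]
            · simp
          simp [gK, Kc, hs]
        rw [h]; exact Submodule.subset_span (Or.inl (Or.inr ⟨(Pi.single i c, r), rfl⟩))
  have hd : ((0, 0, d) : TorTilde n G) ∈ Submodule.span ℂ (genSet n G) := by
    have h : ((0, 0, d) : TorTilde n G) = ∑ i, d i • gd n G i := by
      have h1 : ∀ i : Fin n, d i • gd n G i = ((0, 0, Pi.single i (d i)) : TorTilde n G) := by
        intro i
        simp [gd, Prod.ext_iff, ← Pi.single_smul, smul_eq_mul]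
      rw [Finset.sum_congr rfl fun i _ => h1 i]
      refine Prod.ext ?_ (Prod.ext ?_ ?_)
      · simp [Prod.fst_sum]
      · simp [Prod.fst_sum, Prod.snd_sum]
      · simp [Prod.snd_sum, Finset.univ_sum_single]
    rw [h]
    exact Submodule.sum_mem _ fun i _ =>
      Submodule.smul_mem _ _ (Submodule.subset_span (Or.inr ⟨i, rfl⟩))
  have hx : ((f, ω, d) : TorTilde n G) = (f, 0, 0) + (0, ω, 0) + (0, 0, d) := by
    simp [Prod.ext_iff]
  rw [hx]
  exact Submodule.add_mem _ (Submodule.add_mem _ hf hω) hd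

lemma comm_formula {n : ℕ} {G : Type*} [LieRing G] [LieAlgebra ℂ G]
    {V : Type*} [AddCommGroup V] [Module ℂ V]
    (ρ : TorTilde n G →ₗ[ℂ] Module.End ℂ V) (m : Fin n → ℤ) (z : V →ₗ[ℂ] V)
    (hz1 : ∀ (r : Fin n → ℤ) (X : G), ρ (gX n G r X) ∘ₗ z = z ∘ₗ ρ (gX n G r X))
    (hz2 : ∀ (u : Fin n → ℂ) (r : Fin n → ℤ), ρ (gK n G u r) ∘ₗ z = z ∘ₗ ρ (gK n G u r))
    (hz3 : ∀ i : Fin n, ρ (gd n G i) ∘ₗ z - z ∘ₗ ρ (gd n G i) = (m i : ℂ) • z)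
    (x : TorTilde n G) :
    ρ x ∘ₗ z = z ∘ₗ ρ x + (∑ i, x.2.2 i * (m i : ℂ)) • z := by
  have hx : x ∈ Submodule.span ℂ (genSet n G) := by rw [torSpan]; trivial
  induction hx using Submodule.span_induction with
  | mem y hy =>
      rcases hy with (⟨p, rfl⟩ | ⟨p, rfl⟩) | ⟨i, rfl⟩
      · have h0 : ((gX n G p.1 p.2).2.2 : Fin n → ℂ) = 0 := rfl
        rw [h0]
        simp [hz1 p.1 p.2]
      · have h0 : ((gK n G p.1 p.2).2.2 : Fin n → ℂ) = 0 := rfl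
        rw [h0]
        simp [hz2 p.1 p.2]
      · have h0 : ((gd n G i).2.2 : Fin n → ℂ) = Pi.single i 1 := rfl
        rw [h0]
        have hs : (∑ j, Pi.single (M := fun _ : Fin n => ℂ) i 1 j * (m j : ℂ)) = (m i : ℂ) := by
          rw [Finset.sum_eq_single i]
          · simp
          · intro j _ hj; simp [Pi.single_eq_of_ne hj]
          · simp
        rw [hs, ← hz3 i]
        abel
  | zero => simp
  | add y w hy hw ihy ihw =>
      have h2 : ((y + w).2.2 : Fin n → ℂ) = y.2.2 + w.2.2 := rfl
      rw [map_add, LinearMap.add_comp, LinearMap.comp_add, ihy, ihw, h2]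
      simp only [Pi.add_apply, add_mul, Finset.sum_add_distrib, add_smul]
      abel
  | smul a y hy ihy =>
      have h2 : ((a • y).2.2 : Fin n → ℂ) = a • y.2.2 := rfl
      rw [map_smul, LinearMap.smul_comp, ihy, h2]
      simp only [Pi.smul_apply, smul_eq_mul, mul_assoc, ← Finset.mul_sum]
      rw [smul_add, LinearMap.comp_smul, mul_smul]

theorem stmt10 (n : ℕ) (G : Type*) [LieRing G] [LieAlgebra ℂ G]
    [FiniteDimensional ℂ G] [LieAlgebra.IsSimple ℂ G]
    (H : LieSubalgebra ℂ G) (hH : H.IsCartanSubalgebra)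
    (Bf : G →ₗ[ℂ] G →ₗ[ℂ] ℂ) (hBsymm : ∀ X Y, Bf X Y = Bf Y X)
    (hBinv : ∀ X Y Z, Bf ⁅X, Y⁆ Z = Bf X ⁅Y, Z⁆)
    -- the toroidal Lie bracket on τ̃:
    (br : TorTilde n G →ₗ[ℂ] TorTilde n G →ₗ[ℂ] TorTilde n G)
    (h1 : ∀ (X Y : G) (r s : Fin n → ℤ),
      br (gX n G r X) (gX n G s Y) =
        gX n G (r + s) ⁅X, Y⁆ + Bf X Y • gK n G (zc r) (r + s))
    (h2 : ∀ (ω : OmegaQuot n) (r s : Fin n → ℤ) (X : G) (u : Fin n → ℂ),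
      br (0, ω, 0) (gX n G r X) = 0 ∧ br (0, ω, 0) (gK n G u s) = 0)
    (h3 : ∀ (i : Fin n) (r : Fin n → ℤ) (X : G),
      br (gd n G i) (gX n G r X) = (r i : ℂ) • gX n G r X)
    (h4 : ∀ (i : Fin n) (u : Fin n → ℂ) (r : Fin n → ℤ),
      br (gd n G i) (gK n G u r) = (r i : ℂ) • gK n G u r)
    (h5 : ∀ i j : Fin n, br (gd n G i) (gd n G j) = 0)
    (hskew : ∀ x, br x x = 0)
    (hjac : ∀ x y z, br x (br y z) + br y (br z x) + br z (br x y) = 0)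
    -- V is a module for τ̃:
    (V : Type*) [AddCommGroup V] [Module ℂ V] [Nontrivial V]
    (ρ : TorTilde n G →ₗ[ℂ] Module.End ℂ V)
    (hρ : ∀ x y, ρ (br x y) = ⁅ρ x, ρ y⁆)
    -- V is a weight module with finite-dimensional weight spaces:
    (hwt : ⨆ χ : TorTilde n G → ℂ, wtSp n G H ρ χ = ⊤)
    (hfin : ∀ χ : TorTilde n G → ℂ, FiniteDimensional ℂ (wtSp n G H ρ χ))
    -- V is irreducible:
    (hirr : ∀ U : Submodule ℂ V, (∀ x v, v ∈ U → ρ x v ∈ U) → U = ⊥ ∨ U = ⊤)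
    -- z₁ and z₂ are nonzero central operators of degree m:
    (m : Fin n → ℤ) (z₁ z₂ : V →ₗ[ℂ] V) (hz₁ : z₁ ≠ 0) (hz₂ : z₂ ≠ 0)
    (hz11 : ∀ (r : Fin n → ℤ) (X : G), ρ (gX n G r X) ∘ₗ z₁ = z₁ ∘ₗ ρ (gX n G r X))
    (hz12 : ∀ (u : Fin n → ℂ) (r : Fin n → ℤ), ρ (gK n G u r) ∘ₗ z₁ = z₁ ∘ₗ ρ (gK n G u r))
    (hz13 : ∀ i : Fin n, ρ (gd n G i) ∘ₗ z₁ - z₁ ∘ₗ ρ (gd n G i) = (m i : ℂ) • z₁)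
    (hz21 : ∀ (r : Fin n → ℤ) (X : G), ρ (gX n G r X) ∘ₗ z₂ = z₂ ∘ₗ ρ (gX n G r X))
    (hz22 : ∀ (u : Fin n → ℂ) (r : Fin n → ℤ), ρ (gK n G u r) ∘ₗ z₂ = z₂ ∘ₗ ρ (gK n G u r))
    (hz23 : ∀ i : Fin n, ρ (gd n G i) ∘ₗ z₂ - z₂ ∘ₗ ρ (gd n G i) = (m i : ℂ) • z₂) :
    -- z₁ is a nonzero scalar multiple of z₂:
    ∃ lam : ℂ, lam ≠ 0 ∧ z₁ = lam • z₂ := by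
  have hc1 : ∀ x v, ρ x (z₁ v) = z₁ (ρ x v) + (∑ i, x.2.2 i * (m i : ℂ)) • z₁ v := by
    intro x v
    simpa using LinearMap.congr_fun (comm_formula ρ m z₁ hz11 hz12 hz13 x) v
  have hc2 : ∀ x v, ρ x (z₂ v) = z₂ (ρ x v) + (∑ i, x.2.2 i * (m i : ℂ)) • z₂ v := by
    intro x v
    simpa using LinearMap.congr_fun (comm_formula ρ m z₂ hz21 hz22 hz23 x) v
  -- z₂ is bijective
  have hkerinv : ∀ x v, v ∈ LinearMap.ker z₂ → ρ x v ∈ LinearMap.ker z₂ := by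
    intro x v hv
    rw [LinearMap.mem_ker] at hv ⊢
    have h := hc2 x v
    rw [hv, smul_zero, add_zero, map_zero] at h
    exact h.symm
  have hinj : Function.Injective z₂ := by
    rw [← LinearMap.ker_eq_bot]
    rcases hirr _ hkerinv with h | h
    · exact h
    · exact absurd (LinearMap.ker_eq_top.mp h) hz₂
  have hrinv : ∀ x v, v ∈ LinearMap.range z₂ → ρ x v ∈ LinearMap.range z₂ := by
    rintro x v ⟨w, rfl⟩
    exact ⟨ρ x w + (∑ i, x.2.2 i * (m i : ℂ)) • w,
      by rw [map_add, map_smul, ← hc2 x w]⟩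
  have hsurj : Function.Surjective z₂ := by
    rw [← LinearMap.range_eq_top]
    rcases hirr _ hrinv with h | h
    · exact absurd (LinearMap.range_eq_bot.mp h) hz₂
    · exact h
  let e := LinearEquiv.ofBijective z₂ ⟨hinj, hsurj⟩
  have hsymm : ∀ u, e.symm (z₂ u) = u := by
    intro u
    have : z₂ u = e u := rfl
    rw [this, e.symm_apply_apply]
  have happ : ∀ v, z₂ (e.symm v) = v := by
    intro v
    have : z₂ (e.symm v) = e (e.symm v) := rfl
    rw [this, e.apply_symm_apply]
  let T : V →ₗ[ℂ] V := z₁ ∘ₗ (e.symm : V →ₗ[ℂ] V)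
  have hTz : ∀ v, T (z₂ v) = z₁ v := by
    intro v
    show z₁ (e.symm (z₂ v)) = z₁ v
    rw [hsymm]
  have hTcomm : ∀ x v, ρ x (T v) = T (ρ x v) := by
    intro x v
    have h1 : ρ x v = z₂ (ρ x (e.symm v) + (∑ i, x.2.2 i * (m i : ℂ)) • e.symm v) := by
      conv_lhs => rw [← happ v]
      rw [hc2 x (e.symm v), map_add, map_smul]
    have h2 : e.symm (ρ x v) = ρ x (e.symm v) + (∑ i, x.2.2 i * (m i : ℂ)) • e.symm v := by
      rw [h1, hsymm]
    show ρ x (z₁ (e.symm v)) = z₁ (e.symm (ρ x v))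
    rw [h2, hc1 x (e.symm v), map_add, map_smul]
  -- a nonzero weight space
  have hχ : ∃ χ : TorTilde n G → ℂ, wtSp n G H ρ χ ≠ ⊥ := by
    by_contra h
    push_neg at h
    have h2 : (⊤ : Submodule ℂ V) = ⊥ := by
      rw [← hwt]
      simp [h]
    exact absurd h2 top_ne_bot
  obtain ⟨χ, hχ⟩ := hχ
  have hTW : ∀ v ∈ wtSp n G H ρ χ, T v ∈ wtSp n G H ρ χ := by
    intro v hv
    simp only [wtSp, Submodule.mem_iInf] at hv ⊢
    intro x hx
    have h := hv x hx
    rw [Module.End.mem_eigenspace_iff] at h ⊢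
    rw [hTcomm, h, map_smul]
  haveI := hfin χ
  haveI : Nontrivial (wtSp n G H ρ χ) := Submodule.nontrivial_iff_ne_bot.mpr hχ
  obtain ⟨lam, hlam⟩ := Module.End.exists_eigenvalue (T.restrict hTW)
  obtain ⟨w, hw⟩ := hlam.exists_hasEigenvector
  have hTw : T (w : V) = lam • (w : V) := by
    have h := hw.apply_eq_smul
    have h2 := congrArg (Subtype.val) h
    rwa [LinearMap.restrict_coe_apply] at h2
  have hker2inv : ∀ x v, v ∈ LinearMap.ker (T - lam • LinearMap.id) →
      ρ x v ∈ LinearMap.ker (T - lam • LinearMap.id) := by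
    intro x v hv
    rw [LinearMap.mem_ker] at hv ⊢
    simp only [LinearMap.sub_apply, LinearMap.smul_apply, LinearMap.id_apply] at hv ⊢
    have hv' : T v = lam • v := by rw [← sub_eq_zero]; exact hv
    rw [← hTcomm, hv', map_smul, sub_self]
  have hTid : ∀ v, T v = lam • v := by
    rcases hirr _ hker2inv with h | h
    · exfalso
      have hwmem : (w : V) ∈ LinearMap.ker (T - lam • LinearMap.id) := by
        rw [LinearMap.mem_ker]
        simp only [LinearMap.sub_apply, LinearMap.smul_apply, LinearMap.id_apply]
        rw [hTw, sub_self]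
      rw [h, Submodule.mem_bot] at hwmem
      exact hw.2 (Subtype.ext hwmem)
    · intro v
      have hv : v ∈ LinearMap.ker (T - lam • LinearMap.id) := by rw [h]; trivial
      rw [LinearMap.mem_ker] at hv
      simp only [LinearMap.sub_apply, LinearMap.smul_apply, LinearMap.id_apply] at hv
      rw [← sub_eq_zero]; exact hv
  have hz12' : z₁ = lam • z₂ := by
    ext v
    rw [LinearMap.smul_apply, ← hTz v, hTid]
  refine ⟨lam, ?_, hz12'⟩
  intro h0
  apply hz₁
  rw [hz12', h0, zero_smul]
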